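/- For every d ≥ 1 and n ≥ 1, the space of elementary differentials decomposes as a direct sum indexed by multi-indices: W_d(n) = ⊕_{m ∈ MI(n)} W_d(n)[m], where W_d(n)[m] is the real span of {F(τ) : τ ∈ RT(n), π(τ) = m}. That is, the subspaces W_d(n)[m] together span W_d(n), and whenever w_m ∈ W_d(n)[m] for each m ∈ MI(n) satisfy Σ_m w_m = 0, then w_m = 0 for every m. (This decomposition underlies the existence of a faithful 1-weak combinatorial description of W_d compatible with the unlabelled multi-indices.) -/

import Mathlib

open Finset

/-- The type of smooth maps from `ℝ^d` to `ℝ^d` (i.e. `C_d = C^∞(ℝ^d, ℝ^d)`). -/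
def SmoothMapD (d : ℕ) : Type :=
  {f : (Fin d → ℝ) → (Fin d → ℝ) // ∀ k : ℕ, ContDiff ℝ k f}

/-- A rooted tree on a finite vertex set `V`: a set `E` of (parent, child) edges together with a
root, such that every non-root vertex has a unique parent, the root has no parent, and every
vertex reaches the root by iteratively passing to its parent. -/
structure RTree (V : Type) [Fintype V] [DecidableEq V] where
  E : Finset (V × V)
  root : V
  parent_unique : ∀ v : V, v ≠ root → ∃! u : V, (u, v) ∈ E
  root_no_parent : ∀ u : V, (u, root) ∉ E
  reaches_root : ∀ v : V, Relation.ReflTransGen (fun a b : V => (b, a) ∈ E) v root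

/-- The children of a vertex `v` of a rooted tree: `C_v = {w | (v, w) ∈ E}`. -/
def RTree.children {V : Type} [Fintype V] [DecidableEq V] (τ : RTree V) (v : V) :
    Finset V :=
  Finset.univ.filter (fun w => (v, w) ∈ τ.E)

/-- Partial derivative `∂_i` of a scalar function on `ℝ^d`. -/
noncomputable def pd {d : ℕ} (i : Fin d) (g : (Fin d → ℝ) → ℝ) : (Fin d → ℝ) → ℝ :=
  fun x => fderiv ℝ g x (Pi.single i 1)

/-- Iterated partial derivatives along a list of directions. -/
noncomputable def pdList {d : ℕ} (l : List (Fin d)) (g : (Fin d → ℝ) → ℝ) : (Fin d → ℝ) → ℝ :=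
  l.foldr pd g

/-- The elementary differential of a rooted tree, in closed form: the `j`-th component of
`F(τ)((f^v)_v)(x)` is the sum over all choices of an index `idx v ∈ [d]` for each vertex `v`,
subject to `idx root = j`, of the product over all vertices `v` of
`∂_{idx c₁} ⋯ ∂_{idx c_k} (f^v)_{idx v} (x)` where `c₁, …, c_k` are the children of `v`.
For smooth inputs this agrees with the usual recursive definition. -/
noncomputable def elemDiff {V : Type} [Fintype V] [DecidableEq V] {d : ℕ} (τ : RTree V)
    (f : V → ((Fin d → ℝ) → (Fin d → ℝ))) : (Fin d → ℝ) → (Fin d → ℝ) :=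
  fun x j =>
    ∑ idx : V → Fin d,
      if idx τ.root = j then
        ∏ v : V, pdList ((τ.children v).toList.map idx) (fun y => f v y (idx v)) x
      else 0

/-- The elementary differential `F(τ)` evaluated on smooth maps. -/
noncomputable def Fel (d : ℕ) {V : Type} [Fintype V] [DecidableEq V] (τ : RTree V)
    (f : V → SmoothMapD d) : (Fin d → ℝ) → (Fin d → ℝ) :=
  elemDiff τ (fun v => (f v).1)
/-- `W_d(n)`: the span of the elementary differentials of rooted trees on `n` vertices, inside
the space of functionals `(C_d)^n → C_d`. -/
noncomputable def Wspace (d n : ℕ) :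
    Submodule ℝ ((Fin n → SmoothMapD d) → (Fin d → ℝ) → (Fin d → ℝ)) :=
  Submodule.span ℝ (Set.range (fun τ : RTree (Fin n) => Fel d τ))
/-- The type of smooth functions `ℝ → ℝ` (i.e. `C_1 = C^∞(ℝ, ℝ)`). -/
def SmoothR : Type := {f : ℝ → ℝ // ∀ k : ℕ, ContDiff ℝ k f}

/-- A multi-index on `[n]`: a map `φ : [n] → ℕ` with `∑ v, φ v = n - 1`. -/
structure MultiIndex (n : ℕ) where
  φ : Fin n → ℕ
  sum_eq : ∑ v, φ v = n - 1

/-- The elementary differential `G(m)(f₁, …, fₙ) = f₁^{(φ 1)} ⋯ fₙ^{(φ n)}` of a multi-index. -/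
noncomputable def Gmap {n : ℕ} (m : MultiIndex n) (f : Fin n → SmoothR) : ℝ → ℝ :=
  fun t => ∏ v, iteratedDeriv (m.φ v) ((f v).1) t


section Aux

lemma smooth_pd {d : ℕ} (i : Fin d) (g : (Fin d → ℝ) → ℝ)
    (hg : ∀ k : ℕ, ContDiff ℝ k g) (k : ℕ) : ContDiff ℝ k (pd i g) := by
  have h : ContDiff ℝ k (fderiv ℝ g) := by
    refine (hg (k+1)).fderiv_right ?_
    norm_cast
  exact h.clm_apply contDiff_const

lemma smooth_pdList {d : ℕ} (l : List (Fin d)) (g : (Fin d → ℝ) → ℝ)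
    (hg : ∀ k : ℕ, ContDiff ℝ k g) (k : ℕ) : ContDiff ℝ k (pdList l g) := by
  induction l generalizing k with
  | nil => exact hg k
  | cons i l ih => exact smooth_pd i (pdList l g) (fun k => ih k) k

lemma pd_comp_smul_add {d : ℕ} (i : Fin d) (g : (Fin d → ℝ) → ℝ)
    (hg : ∀ k : ℕ, ContDiff ℝ k g) (c : ℝ) (x z : Fin d → ℝ) :
    pd i (fun y => g (c • y + x)) z = c * pd i g (c • z + x) := by
  have hA : HasFDerivAt (fun y : Fin d → ℝ => c • y + x)
      (c • ContinuousLinearMap.id ℝ (Fin d → ℝ)) z :=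
    ((hasFDerivAt_id z).const_smul c).add_const x
  have hg1 : DifferentiableAt ℝ g (c • z + x) :=
    ((hg 1).differentiable (by simp)).differentiableAt
  have hcomp : HasFDerivAt (fun y => g (c • y + x))
      ((fderiv ℝ g (c • z + x)).comp (c • ContinuousLinearMap.id ℝ (Fin d → ℝ))) z :=
    (hg1.hasFDerivAt).comp z hA
  show fderiv ℝ (fun y => g (c • y + x)) z (Pi.single i 1) = _
  rw [hcomp.fderiv]
  simp [pd, smul_eq_mul, mul_comm]

lemma pd_const_mul' {d : ℕ} (i : Fin d) (a : ℝ) (h : (Fin d → ℝ) → ℝ)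
    (hh : Differentiable ℝ h) (z : Fin d → ℝ) :
    pd i (fun y => a * h y) z = a * pd i h z := by
  show fderiv ℝ (fun y => a * h y) z (Pi.single i 1) = _
  rw [fderiv_const_mul (hh z) a]
  simp [pd]

lemma pdList_comp_smul_add {d : ℕ} (l : List (Fin d)) (g : (Fin d → ℝ) → ℝ)
    (hg : ∀ k : ℕ, ContDiff ℝ k g) (c : ℝ) (x : Fin d → ℝ) (z : Fin d → ℝ) :
    pdList l (fun y => g (c • y + x)) z = c ^ l.length * pdList l g (c • z + x) := by
  induction l generalizing z with
  | nil => simp [pdList]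
  | cons i l ih =>
    have hsm : ∀ k : ℕ, ContDiff ℝ k (pdList l g) := smooth_pdList l g hg
    have heq : (pdList l fun y => g (c • y + x))
        = fun z' => c ^ l.length * pdList l g (c • z' + x) := funext fun z' => ih z'
    show pd i (pdList l fun y => g (c • y + x)) z = _
    rw [heq]
    have hdiff : Differentiable ℝ (fun z' => pdList l g (c • z' + x)) := by
      have : ContDiff ℝ 1 (fun z' : Fin d → ℝ => pdList l g (c • z' + x)) :=
        (hsm 1).comp ((contDiff_id.const_smul c).add contDiff_const)
      exact this.differentiable (by simp)
    rw [pd_const_mul' i _ _ hdiff z, pd_comp_smul_add i (pdList l g) hsm c x z]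
    show _ = c ^ (l.length + 1) * pd i (pdList l g) (c • z + x)
    ring

noncomputable def scaleF {d : ℕ} (c : ℝ) (x : Fin d → ℝ) (f : SmoothMapD d) : SmoothMapD d :=
  ⟨fun y => f.1 (c • y + x),
   fun k => (f.2 k).comp ((contDiff_id.const_smul c).add contDiff_const)⟩

lemma Fel_scale {d n : ℕ} (τ : RTree (Fin n)) (f : Fin n → SmoothMapD d)
    (lam : Fin n → ℝ) (x : Fin d → ℝ) (j : Fin d) :
    Fel d τ (fun v => scaleF (lam v) x (f v)) 0 j
      = (∏ v, lam v ^ (τ.children v).card) * Fel d τ f x j := by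
  show (∑ idx : Fin n → Fin d, if idx τ.root = j then
        ∏ v, pdList ((τ.children v).toList.map idx)
          (fun y => (f v).1 (lam v • y + x) (idx v)) 0 else 0)
      = (∏ v, lam v ^ (τ.children v).card) *
        ∑ idx : Fin n → Fin d, if idx τ.root = j then
        ∏ v, pdList ((τ.children v).toList.map idx) (fun y => (f v).1 y (idx v)) x else 0
  rw [Finset.mul_sum]
  refine Finset.sum_congr rfl fun idx _ => ?_
  rw [mul_ite, mul_zero]
  split
  · have hterm : ∀ v : Fin n, pdList ((τ.children v).toList.map idx)
        (fun y => (f v).1 (lam v • y + x) (idx v)) 0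
        = lam v ^ (τ.children v).card *
          pdList ((τ.children v).toList.map idx) (fun y => (f v).1 y (idx v)) x := by
      intro v
      have hg : ∀ k : ℕ, ContDiff ℝ k (fun y => (f v).1 y (idx v)) :=
        fun k => (contDiff_pi.mp ((f v).2 k)) (idx v)
      have := pdList_comp_smul_add ((τ.children v).toList.map idx)
        (fun y => (f v).1 y (idx v)) hg (lam v) x 0
      simpa using this
    calc (∏ v, pdList ((τ.children v).toList.map idx)
          (fun y => (f v).1 (lam v • y + x) (idx v)) 0)
        = ∏ v, (lam v ^ (τ.children v).card *
            pdList ((τ.children v).toList.map idx) (fun y => (f v).1 y (idx v)) x) :=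
        Finset.prod_congr rfl fun v _ => hterm v
      _ = _ := Finset.prod_mul_distrib
  · rfl

lemma MultiIndex.ext' {n : ℕ} {m m' : MultiIndex n} (h : m.φ = m'.φ) : m = m' := by
  cases m; cases m'; cases h; rfl

lemma monomial_indep {n : ℕ} (s : Finset (MultiIndex n)) (c : MultiIndex n → ℝ)
    (h : ∀ lam : Fin n → ℝ, ∑ m ∈ s, (∏ v, lam v ^ m.φ v) * c m = 0) :
    ∀ m ∈ s, c m = 0 := by
  intro m₀ hm₀
  set e : MultiIndex n → (Fin n →₀ ℕ) := fun m => Finsupp.equivFunOnFinite.symm m.φ with he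
  have einj : Function.Injective e := by
    intro a b hab
    apply MultiIndex.ext'
    have := congrArg Finsupp.equivFunOnFinite hab
    simpa [he] using this
  set P : MvPolynomial (Fin n) ℝ := ∑ m ∈ s, MvPolynomial.monomial (e m) (c m) with hP
  have hP0 : P = 0 := by
    apply MvPolynomial.funext
    intro lam
    rw [hP, map_sum, map_zero]
    have : ∀ m ∈ s, MvPolynomial.eval lam (MvPolynomial.monomial (e m) (c m))
        = (∏ v, lam v ^ m.φ v) * c m := by
      intro m _
      rw [MvPolynomial.eval_monomial]
      rw [Finsupp.prod_pow]
      simp [he, mul_comm, Finsupp.equivFunOnFinite]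
      exact Or.inl rfl
    rw [Finset.sum_congr rfl this]
    exact h lam
  have := congrArg (MvPolynomial.coeff (e m₀)) hP0
  rw [hP, MvPolynomial.coeff_sum] at this
  simp only [MvPolynomial.coeff_monomial, MvPolynomial.coeff_zero] at this
  rwa [Finset.sum_eq_single m₀ (fun m _ hne => if_neg (fun hc => hne (einj hc)))
    (fun habs => absurd hm₀ habs), if_pos rfl] at this

lemma sum_card_children {n : ℕ} (τ : RTree (Fin n)) :
    ∑ v, (τ.children v).card = n - 1 := by
  have h1 : τ.E.card = ∑ v : Fin n, (τ.children v).card := by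
    rw [Finset.card_eq_sum_card_fiberwise (f := Prod.fst) (t := univ) (fun p _ => mem_univ _)]
    refine Finset.sum_congr rfl fun v _ => ?_
    refine Finset.card_bij' (fun p _ => p.2) (fun w _ => (v, w)) ?_ ?_ ?_ ?_
    · intro p hp
      simp only [Finset.mem_filter] at hp
      simp only [RTree.children, Finset.mem_filter, Finset.mem_univ, true_and]
      rw [← hp.2]
      exact hp.1
    · intro w hw
      simp only [RTree.children, Finset.mem_filter, Finset.mem_univ, true_and] at hw
      simp [hw]
    · intro p hp
      simp only [Finset.mem_filter] at hp
      exact Prod.ext hp.2.symm rfl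
    · intro w hw; rfl
  have h2 : τ.E.card = (Finset.univ.erase τ.root).card := by
    refine Finset.card_bij (fun p _ => p.2) ?_ ?_ ?_
    · rintro ⟨a, b⟩ hp
      refine Finset.mem_erase.2 ⟨?_, mem_univ _⟩
      intro hroot
      simp only at hroot
      exact τ.root_no_parent a (hroot ▸ hp)
    · rintro ⟨a, b⟩ hp ⟨a', b'⟩ hq hpq
      simp only at hpq
      subst hpq
      have hne : b ≠ τ.root := fun hroot => τ.root_no_parent a (hroot ▸ hp)
      obtain ⟨u, _, huniq⟩ := τ.parent_unique b hne
      have e1 : a = u := huniq a hp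
      have e2 : a' = u := huniq a' hq
      rw [e1, e2]
    · intro v hv
      obtain ⟨u, hu, _⟩ := τ.parent_unique v (Finset.mem_erase.1 hv).1
      exact ⟨(u, v), hu, rfl⟩
  rw [← h1, h2, Finset.card_erase_of_mem (mem_univ _), Finset.card_univ, Fintype.card_fin]

lemma mem_span_eval {d n : ℕ} (m : MultiIndex n)
    (u : (Fin n → SmoothMapD d) → (Fin d → ℝ) → (Fin d → ℝ))
    (hu : u ∈ Submodule.span ℝ
      {u | ∃ τ : RTree (Fin n), (∀ v, (τ.children v).card = m.φ v) ∧ Fel d τ = u})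
    (f : Fin n → SmoothMapD d) (lam : Fin n → ℝ) (x : Fin d → ℝ) (j : Fin d) :
    u (fun v => scaleF (lam v) x (f v)) 0 j = (∏ v, lam v ^ m.φ v) * u f x j := by
  induction hu using Submodule.span_induction with
  | mem u hu =>
    obtain ⟨τ, hc, rfl⟩ := hu
    rw [Fel_scale]
    congr 1
    exact Finset.prod_congr rfl fun v _ => by rw [hc v]
  | zero => simp
  | add u v _ _ hu hv =>
    simp only [Pi.add_apply]
    rw [hu, hv]; ring
  | smul a u _ hu =>
    simp only [Pi.smul_apply, smul_eq_mul]
    rw [hu]; ring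

end Aux

/-- Theorem 6.6 (key decomposition): `W_d(n)` is the direct sum, over the multi-indices
`m ∈ MI(n)`, of the subspaces `W_d(n)[m]` spanned by the elementary differentials of the
rooted trees with multi-index `m`: these subspaces span `W_d(n)`, and they are independent. -/
theorem Wspace_direct_sum_over_multiindices (d n : ℕ) (hd : 1 ≤ d) (hn : 1 ≤ n) :
    (⨆ m : MultiIndex n, Submodule.span ℝ
        {w | ∃ τ : RTree (Fin n), (∀ v, (τ.children v).card = m.φ v) ∧ Fel d τ = w})
      = Wspace d n ∧
    ∀ (s : Finset (MultiIndex n))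
      (w : MultiIndex n → ((Fin n → SmoothMapD d) → (Fin d → ℝ) → (Fin d → ℝ))),
      (∀ m ∈ s, w m ∈ Submodule.span ℝ
        {u | ∃ τ : RTree (Fin n), (∀ v, (τ.children v).card = m.φ v) ∧ Fel d τ = u}) →
      ∑ m ∈ s, w m = 0 → ∀ m ∈ s, w m = 0 := by
  constructor
  · apply le_antisymm
    · refine iSup_le fun m => Submodule.span_le.2 ?_
      rintro u ⟨τ, -, rfl⟩
      exact Submodule.subset_span ⟨τ, rfl⟩
    · show Submodule.span ℝ _ ≤ _
      refine Submodule.span_le.2 ?_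
      rintro u ⟨τ, rfl⟩
      refine Submodule.mem_iSup_of_mem ⟨fun v => (τ.children v).card, sum_card_children τ⟩ ?_
      exact Submodule.subset_span ⟨τ, fun v => rfl, rfl⟩
  · intro s w hw hsum m₀ hm₀
    funext f x j
    show w m₀ f x j = 0
    refine monomial_indep s (fun m => w m f x j) ?_ m₀ hm₀
    intro lam
    have h0 : (∑ m ∈ s, w m) (fun v => scaleF (lam v) x (f v)) 0 j = 0 := by rw [hsum]; rfl
    rw [Finset.sum_apply, Finset.sum_apply, Finset.sum_apply] at h0
    rw [← h0]
    exact Finset.sum_congr rfl fun m hm =>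
      (mem_span_eval m (w m) (hw m hm) f lam x j).symm
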